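/- Let R be an unramified dyadic local ring. For every n ≥ 1, the lattice ℍⁿ (orthogonal sum of n hyperbolic planes) primitively represents every even R-lattice of rank n. -/

import Mathlib

open Matrix

/-- Primitive representation: `T` with `Tᵀ H T = G` whose image is a direct summand
(equivalently `T` has a left inverse). -/
def PrimRep {R : Type*} [CommRing R] {ι κ : Type*} [Fintype ι] [Fintype κ] [DecidableEq κ]
    (G : Matrix κ κ R) (H : Matrix ι ι R) : Prop :=
  ∃ T : Matrix ι κ R, Tᵀ * H * T = G ∧ ∃ P : Matrix κ ι R, P * T = 1

/-- The Gram matrix of the orthogonal sum of `n` hyperbolic planes `ℍⁿ`. -/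
def HypN (R : Type*) [CommRing R] (n : ℕ) :
    Matrix (Fin n × Fin 2) (Fin n × Fin 2) R := fun p q =>
  if p.1 = q.1 ∧ p.2 ≠ q.2 then 1 else 0

/-- Over an unramified dyadic local ring `R`, the lattice `ℍⁿ` primitively represents every
even `R`-lattice of rank `n`. -/
theorem HypN_primitively_represents_even
    (R : Type*) [CommRing R] [IsDomain R] [IsDiscreteValuationRing R]
    [IsAdicComplete (IsLocalRing.maximalIdeal R) R]
    [Finite (IsLocalRing.ResidueField R)]
    (h2 : Prime (2 : R))
    (n : ℕ) (hn : 1 ≤ n) (G : Matrix (Fin n) (Fin n) R)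
    (hG : G.IsSymm) (hdet : G.det ≠ 0)
    (heven : ∀ i, ∃ β : R, G i i = 2 * β) :
    PrimRep G (HypN R n) := by
  classical
  -- Choose a matrix `A` with `A + Aᵀ = G`.
  set β : Fin n → R := fun i => (heven i).choose with hβdef
  have hβ : ∀ i, G i i = 2 * β i := fun i => (heven i).choose_spec
  set A : Matrix (Fin n) (Fin n) R := fun i j =>
    if i < j then G i j else if i = j then β i else 0 with hAdef
  have hAsum : ∀ j k, A j k + A k j = G j k := by
    intro j k
    rcases lt_trichotomy j k with h | h | h
    · simp [hAdef, h, not_lt.mpr h.le, h.ne']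
    · subst h
      simp [hAdef, hβ j, two_mul]
    · have := hG.apply k j
      simp [hAdef, h, not_lt.mpr h.le, h.ne', this]
  set T : Matrix (Fin n × Fin 2) (Fin n) R :=
    fun p j => if p.2 = 0 then (if p.1 = j then (1 : R) else 0) else A p.1 j with hTdef
  set P : Matrix (Fin n) (Fin n × Fin 2) R :=
    fun j p => if p.2 = 0 ∧ p.1 = j then (1 : R) else 0 with hPdef
  refine ⟨T, ?_, P, ?_⟩
  · ext j k
    have expand : (Tᵀ * HypN R n * T) j k
        = ∑ p : Fin n × Fin 2, ∑ q : Fin n × Fin 2, T p j * HypN R n p q * T q k := by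
      simp only [Matrix.mul_apply, Matrix.transpose_apply]
      rw [Finset.sum_comm]
      refine Finset.sum_congr rfl fun q _ => ?_
      rw [Finset.sum_mul]
    have hH0 : ∀ (i : Fin n) (q : Fin n × Fin 2),
        HypN R n (i, (0 : Fin 2)) q = if q = (i, 1) then (1 : R) else 0 := by
      rintro i ⟨i', c'⟩
      fin_cases c' <;> simp [HypN, Prod.ext_iff, eq_comm]
    have hH1 : ∀ (i : Fin n) (q : Fin n × Fin 2),
        HypN R n (i, (1 : Fin 2)) q = if q = (i, 0) then (1 : R) else 0 := by
      rintro i ⟨i', c'⟩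
      fin_cases c' <;> simp [HypN, Prod.ext_iff, eq_comm]
    have hT0 : ∀ i j', T (i, (0 : Fin 2)) j' = if i = j' then (1 : R) else 0 := by
      intro i j'; simp [hTdef]
    have hT1 : ∀ i j', T (i, (1 : Fin 2)) j' = A i j' := by
      intro i j'; simp [hTdef]
    rw [expand, Fintype.sum_prod_type]
    simp only [Fin.sum_univ_two, hH0, hH1, mul_ite, ite_mul, mul_one, mul_zero, one_mul,
      zero_mul, Finset.sum_ite_eq', Finset.mem_univ, if_true, hT0, hT1,
      Finset.sum_add_distrib]
    exact hAsum j k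
  · ext j k
    rw [Matrix.mul_apply]
    simp only [hTdef, hPdef, Matrix.mul_apply, Matrix.one_apply]
    rw [Fintype.sum_prod_type]
    rw [Finset.sum_eq_single j]
    · rw [Fin.sum_univ_two]
      norm_num
    · intro b _ hb
      rw [Fin.sum_univ_two]
      simp [hb]
    · simp
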